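/- Let X₁, …, Xₙ be i.i.d. N(θ, σ²) random variables and Y₁, …, Yₙ be i.i.d. N(θ, kσ²) random variables with k > 0, with the two samples independent of each other. Let a₁, …, aₙ, b₁, …, bₙ > 0 satisfy Σᵢ aᵢ = Σᵢ bᵢ = 1. If k > (Σᵢ aᵢ²)/(Σᵢ bᵢ²), then Σᵢ aᵢXᵢ is Pitman closer to θ than Σᵢ bᵢYᵢ, i.e., P(|Σᵢ aᵢXᵢ − θ| < |Σᵢ bᵢYᵢ − θ|) ≥ 1/2. In particular, the sample mean X̄ = (1/n)Σᵢ Xᵢ is Pitman closer to θ than Ȳ = (1/n)Σᵢ Yᵢ whenever k > 1. -/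

import Mathlib

open MeasureTheory ProbabilityTheory Real
open scoped ENNReal NNReal

section PitmanAux

lemma gaussianPDFReal_conv {v₁ v₂ : ℝ≥0} (h₁ : v₁ ≠ 0) (h₂ : v₂ ≠ 0) (z x : ℝ) :
    gaussianPDFReal 0 v₁ x * gaussianPDFReal 0 v₂ (z - x)
      = gaussianPDFReal 0 (v₁ + v₂) z
        * gaussianPDFReal ((v₁ : ℝ) * z / ((v₁ : ℝ) + v₂)) (v₁ * v₂ / (v₁ + v₂)) x := by
  have hA : (0:ℝ) < v₁ := by positivity
  have hB : (0:ℝ) < v₂ := by positivity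
  have hAB : (0:ℝ) < (v₁:ℝ) + v₂ := by positivity
  have hπ := Real.pi_pos
  have hcoe : ((v₁ * v₂ / (v₁ + v₂) : ℝ≥0) : ℝ) = (v₁:ℝ) * v₂ / ((v₁:ℝ) + v₂) := by push_cast; ring
  have hcoe2 : ((v₁ + v₂ : ℝ≥0) : ℝ) = (v₁:ℝ) + v₂ := by push_cast; ring
  simp only [gaussianPDFReal, hcoe, hcoe2, sub_zero]
  rw [mul_mul_mul_comm, mul_mul_mul_comm ((√(2 * π * ((v₁:ℝ) + v₂)))⁻¹)]
  congr 1
  · rw [← mul_inv, ← mul_inv, ← Real.sqrt_mul (by positivity), ← Real.sqrt_mul (by positivity)]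
    congr 2
    field_simp
  · rw [← Real.exp_add, ← Real.exp_add]
    congr 1
    field_simp
    ring

lemma gaussianReal_conv {v₁ v₂ : ℝ≥0} (h₁ : v₁ ≠ 0) (h₂ : v₂ ≠ 0) :
    ((gaussianReal 0 v₁).prod (gaussianReal 0 v₂)).map (fun p : ℝ × ℝ => p.1 + p.2)
      = gaussianReal 0 (v₁ + v₂) := by
  have h12 : v₁ + v₂ ≠ 0 := by simp [h₁]
  ext s hs
  rw [Measure.map_apply (by fun_prop : Measurable fun p : ℝ × ℝ => p.1 + p.2) hs,
      Measure.prod_apply ((by fun_prop : Measurable fun p : ℝ × ℝ => p.1 + p.2) hs)]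
  have hset : ∀ x : ℝ, (Prod.mk x ⁻¹' ((fun p : ℝ × ℝ => p.1 + p.2) ⁻¹' s)) = (fun y => x + y) ⁻¹' s := by
    intro x; rfl
  have hmap : ∀ x : ℝ, gaussianReal 0 v₂ ((fun y => x + y) ⁻¹' s)
      = ∫⁻ z in s, ENNReal.ofReal (gaussianPDFReal 0 v₂ (z - x)) := by
    intro x
    have : gaussianReal 0 v₂ ((fun y => x + y) ⁻¹' s)
        = ((gaussianReal 0 v₂).map (fun y => x + y)) s := by
      rw [Measure.map_apply (measurable_const_add x) hs]
    rw [this]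
    have : (gaussianReal 0 v₂).map (fun y => x + y) = gaussianReal x v₂ := by
      have := gaussianReal_map_const_add (μ := 0) (v := v₂) x
      simpa using this
    rw [this, gaussianReal_apply _ h₂]
    congr 1 with z
    rw [gaussianPDF]
    congr 1
    rw [gaussianPDFReal, gaussianPDFReal]
    simp
  simp only [hset, hmap]
  rw [gaussianReal_of_var_ne_zero _ h₁,
     lintegral_withDensity_eq_lintegral_mul _ (measurable_gaussianPDF _ _)]
  rotate_left
  · exact Measurable.lintegral_prod_right
      (((measurable_gaussianPDFReal 0 v₂).comp (measurable_snd.sub measurable_fst)).ennreal_ofReal)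
  have hswap : ∫⁻ x, gaussianPDF 0 v₁ x * ∫⁻ z in s, ENNReal.ofReal (gaussianPDFReal 0 v₂ (z - x))
      = ∫⁻ z in s, ∫⁻ x, gaussianPDF 0 v₁ x * ENNReal.ofReal (gaussianPDFReal 0 v₂ (z - x)) := by
    rw [lintegral_congr (fun x => (lintegral_const_mul (μ := volume.restrict s)
        (f := fun z => ENNReal.ofReal (gaussianPDFReal 0 v₂ (z - x)))
        (gaussianPDF 0 v₁ x) (((measurable_gaussianPDFReal 0 v₂).comp (measurable_id.sub_const x)).ennreal_ofReal)).symm)]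
    exact lintegral_lintegral_swap
      ((measurable_gaussianPDF 0 v₁).comp measurable_fst |>.mul
        (((measurable_gaussianPDFReal 0 v₂).comp (measurable_snd.sub measurable_fst)).ennreal_ofReal)).aemeasurable
  simp only [Pi.mul_apply]
  rw [hswap, gaussianReal_apply _ h12]
  refine lintegral_congr fun z => ?_
  have key : ∀ x, gaussianPDF 0 v₁ x * ENNReal.ofReal (gaussianPDFReal 0 v₂ (z - x))
      = gaussianPDF 0 (v₁ + v₂) z * gaussianPDF ((v₁ : ℝ) * z / ((v₁ : ℝ) + v₂)) (v₁ * v₂ / (v₁ + v₂)) x := by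
    intro x
    rw [gaussianPDF, gaussianPDF, gaussianPDF, ← ENNReal.ofReal_mul (gaussianPDFReal_nonneg _ _ _),
      ← ENNReal.ofReal_mul (gaussianPDFReal_nonneg _ _ _), gaussianPDFReal_conv h₁ h₂]
  simp_rw [key]
  rw [lintegral_const_mul _ (measurable_gaussianPDF _ _),
    lintegral_gaussianPDF_eq_one _ (by positivity), mul_one]

variable {Ω : Type*} [MeasurableSpace Ω] {μ : Measure Ω} [IsProbabilityMeasure μ]

lemma indep_gauss_add {U V : Ω → ℝ} (hU : Measurable U) (hV : Measurable V)
    (h : IndepFun U V μ) {v₁ v₂ : ℝ≥0} (h₁ : v₁ ≠ 0) (h₂ : v₂ ≠ 0)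
    (hU' : μ.map U = gaussianReal 0 v₁) (hV' : μ.map V = gaussianReal 0 v₂) :
    μ.map (fun ω => U ω + V ω) = gaussianReal 0 (v₁ + v₂) := by
  have hprod := (indepFun_iff_map_prod_eq_prod_map_map hU.aemeasurable hV.aemeasurable).mp h
  have : μ.map (fun ω => U ω + V ω)
      = (μ.map (fun ω => (U ω, V ω))).map (fun p : ℝ × ℝ => p.1 + p.2) := by
    rw [Measure.map_map (by fun_prop : Measurable fun p : ℝ × ℝ => p.1 + p.2) (hU.prodMk hV)]
    rfl
  rw [this, hprod, hU', hV', gaussianReal_conv h₁ h₂]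

lemma indep_gauss_sum {ι : Type*} (Z : ι → Ω → ℝ) (hmeas : ∀ i, Measurable (Z i))
    (hindep : iIndepFun Z μ) (w : ι → ℝ≥0)
    (s : Finset ι) (hs : s.Nonempty) (hw : ∀ i ∈ s, w i ≠ 0)
    (hZ : ∀ i ∈ s, μ.map (Z i) = gaussianReal 0 (w i)) :
    μ.map (fun ω => ∑ i ∈ s, Z i ω) = gaussianReal 0 (∑ i ∈ s, w i) := by
  classical
  induction s using Finset.cons_induction with
  | empty => exact absurd hs (by simp)
  | cons a s ha ih =>
    rcases s.eq_empty_or_nonempty with rfl | hs'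
    · simpa using hZ a (by simp)
    · have hsum := ih hs' (fun i hi => hw i (Finset.mem_cons_of_mem hi))
        (fun i hi => hZ i (Finset.mem_cons_of_mem hi))
      have hind : IndepFun (Z a) (fun ω => ∑ i ∈ s, Z i ω) μ := by
        have := (hindep.indepFun_finsetSum_of_notMem hmeas ha).symm
        have heq : (∑ j ∈ s, Z j) = fun ω => ∑ i ∈ s, Z i ω := by
          funext ω; simp [Finset.sum_apply]
        rwa [heq] at this
      have hws : (∑ i ∈ s, w i) ≠ 0 := fun h0 =>
        hw hs'.choose (Finset.mem_cons_of_mem hs'.choose_spec)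
          (Finset.sum_eq_zero_iff.mp h0 _ hs'.choose_spec)
      have hfinal := indep_gauss_add (hmeas a)
        (Finset.measurable_sum s fun i _ => hmeas i) hind
        (hw a (Finset.mem_cons_self a s)) hws
        (hZ a (Finset.mem_cons_self a s)) hsum
      simpa [Finset.sum_insert ha] using hfinal

lemma half_le_prob {U V : Ω → ℝ} (hU : Measurable U) (hV : Measurable V)
    (h : IndepFun U V μ) {s t : ℝ≥0} (hs : s ≠ 0) (hst : s ≤ t)
    (hU' : μ.map U = gaussianReal 0 s) (hV' : μ.map V = gaussianReal 0 t) :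
    (μ {ω | |U ω| < |V ω|}).toReal ≥ 1 / 2 := by
  set ν := gaussianReal 0 s with hν
  have hspos : (0:ℝ) < s := by positivity
  set c : ℝ := Real.sqrt ((t : ℝ) / s) with hc
  have hc1 : 1 ≤ c := Real.one_le_sqrt.mpr ((one_le_div hspos).mpr (by exact_mod_cast hst))
  have hc0 : 0 < c := lt_of_lt_of_le one_pos hc1
  -- scaling
  have hscale : ν.map (c * ·) = gaussianReal 0 t := by
    rw [hν, gaussianReal_map_const_mul, mul_zero]
    congr 1
    rw [← NNReal.coe_inj]
    simp only [NNReal.coe_mul, NNReal.coe_mk]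
    rw [hc, Real.sq_sqrt (by positivity), div_mul_cancel₀ _ (ne_of_gt hspos)]
  -- the event as a product measure
  have mA : MeasurableSet {p : ℝ × ℝ | |p.1| < |p.2|} :=
    measurableSet_lt measurable_fst.abs measurable_snd.abs
  have hprod := (indepFun_iff_map_prod_eq_prod_map_map hU.aemeasurable hV.aemeasurable).mp h
  have hev : μ {ω | |U ω| < |V ω|} = (ν.prod (ν.map (c * ·))) {p : ℝ × ℝ | |p.1| < |p.2|} := by
    rw [hscale, ← hU', ← hV', ← hprod, Measure.map_apply (hU.prodMk hV) mA]
    rfl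
  -- rewrite as map of Prod.map id (c * ·)
  have hmapprod : ν.prod (ν.map (c * ·)) = (ν.prod ν).map (Prod.map id (c * ·)) := by
    nth_rewrite 1 [show ν = ν.map id from (Measure.map_id).symm]
    exact Measure.map_prod_map _ _ measurable_id (measurable_const_mul c)
  have hkey : (ν.prod (ν.map (c * ·))) {p : ℝ × ℝ | |p.1| < |p.2|}
      = (ν.prod ν) {p : ℝ × ℝ | |p.1| < c * |p.2|} := by
    rw [hmapprod, Measure.map_apply (measurable_id.prodMap (measurable_const_mul c)) mA]
    congr 1
    ext p
    simp [Prod.map, abs_mul, abs_of_pos hc0]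
  -- monotonicity
  have hmono : (ν.prod ν) {p : ℝ × ℝ | |p.1| < |p.2|}
      ≤ (ν.prod ν) {p : ℝ × ℝ | |p.1| < c * |p.2|} := by
    apply measure_mono
    intro p hp
    exact lt_of_lt_of_le hp (le_mul_of_one_le_left (abs_nonneg _) hc1)
  -- swap symmetry
  have hswap : (ν.prod ν) {p : ℝ × ℝ | |p.2| < |p.1|} = (ν.prod ν) {p : ℝ × ℝ | |p.1| < |p.2|} := by
    nth_rewrite 1 [show ν.prod ν = (ν.prod ν).map Prod.swap from (Measure.prod_swap).symm]
    rw [Measure.map_apply measurable_swap (measurableSet_lt measurable_snd.abs measurable_fst.abs)]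
    rfl
  -- ties are null
  have hnull : (ν.prod ν) {p : ℝ × ℝ | |p.1| = |p.2|} = 0 := by
    rw [Measure.prod_apply (measurableSet_eq_fun measurable_fst.abs measurable_snd.abs)]
    have : ∀ x : ℝ, ν (Prod.mk x ⁻¹' {p : ℝ × ℝ | |p.1| = |p.2|}) = 0 := by
      intro x
      have hsub : (Prod.mk x ⁻¹' {p : ℝ × ℝ | |p.1| = |p.2|}) ⊆ {x, -x} := by
        intro y hy
        rcases abs_eq_abs.mp (hy : |x| = |y|) with h' | h'
        · exact Or.inl h'.symm
        · simp only [Set.mem_insert_iff, Set.mem_singleton_iff]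
          right
          have : x = -y := h'
          linarith
      refine measure_mono_null hsub ?_
      have hac := gaussianReal_absolutelyContinuous (0:ℝ) hs
      refine hac ?_
      rw [Set.insert_eq]
      exact measure_union_null Real.volume_singleton Real.volume_singleton
    rw [lintegral_congr this]
    simp
  -- 1 ≤ 2 * p
  have hp2 : (1:ℝ≥0∞) ≤ 2 * (ν.prod ν) {p : ℝ × ℝ | |p.1| < |p.2|} := by
    have huniv : (Set.univ : Set (ℝ × ℝ)) ⊆ {p : ℝ × ℝ | |p.1| < |p.2|} ∪ ({p : ℝ × ℝ | |p.2| < |p.1|} ∪ {p : ℝ × ℝ | |p.1| = |p.2|}) := by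
      intro p _
      rcases lt_trichotomy (|p.1|) (|p.2|) with h' | h' | h'
      · exact Or.inl h'
      · exact Or.inr (Or.inr h')
      · exact Or.inr (Or.inl h')
    calc (1:ℝ≥0∞) = (ν.prod ν) Set.univ := by simp
    _ ≤ (ν.prod ν) ({p : ℝ × ℝ | |p.1| < |p.2|} ∪ ({p : ℝ × ℝ | |p.2| < |p.1|} ∪ {p : ℝ × ℝ | |p.1| = |p.2|})) := measure_mono huniv
    _ ≤ (ν.prod ν) {p : ℝ × ℝ | |p.1| < |p.2|} + ((ν.prod ν) {p : ℝ × ℝ | |p.2| < |p.1|} + (ν.prod ν) {p : ℝ × ℝ | |p.1| = |p.2|}) :=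
        le_trans (measure_union_le _ _) (by gcongr; exact measure_union_le _ _)
    _ = 2 * (ν.prod ν) {p : ℝ × ℝ | |p.1| < |p.2|} := by rw [hswap, hnull]; ring
  have hhalf : (1/2 : ℝ≥0∞) ≤ μ {ω | |U ω| < |V ω|} := by
    rw [hev, hkey]
    refine le_trans ?_ hmono
    rw [ENNReal.div_le_iff (by norm_num) (by norm_num)]
    rwa [mul_comm] at hp2
  have := ENNReal.toReal_mono (measure_ne_top μ _) hhalf
  simpa using this

set_option linter.unusedSectionVars false in
lemma map_affine {W : Ω → ℝ} (hW : Measurable W) {m : ℝ} {v : ℝ≥0}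
    (h : μ.map W = gaussianReal m v) (c : ℝ) :
    μ.map (fun ω => c * (W ω - m)) = gaussianReal 0 (NNReal.mk (c^2) (sq_nonneg c) * v) := by
  have h1 : μ.map (fun ω => W ω - m) = gaussianReal 0 v := by
    have he : (fun ω => W ω - m) = (fun x => x + (-m)) ∘ W := by
      funext ω; simp [sub_eq_add_neg]
    rw [he, ← Measure.map_map (measurable_add_const (-m)) hW, h]
    simpa using gaussianReal_map_add_const (μ := m) (v := v) (-m)
  have he2 : (fun ω => c * (W ω - m)) = (fun x => c * x) ∘ (fun ω => W ω - m) := rfl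
  rw [he2, ← Measure.map_map (measurable_const_mul c) (hW.sub_const m), h1]
  simpa using gaussianReal_map_const_mul (μ := 0) (v := v) c


end PitmanAux

lemma pitman_main {Ω : Type*} [MeasurableSpace Ω] (μ : Measure Ω) [IsProbabilityMeasure μ]
    (n : ℕ) (hn : 0 < n) (X Y : Fin n → Ω → ℝ)
    (hXmeas : ∀ i, Measurable (X i)) (hYmeas : ∀ i, Measurable (Y i))
    (hindep : iIndepFun (Sum.elim X Y) μ)
    (θ : ℝ) (v k : ℝ≥0) (hv : 0 < v) (hk : 0 < k)
    (hXdist : ∀ i, Measure.map (X i) μ = gaussianReal θ v)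
    (hYdist : ∀ i, Measure.map (Y i) μ = gaussianReal θ (k * v))
    (a b : Fin n → ℝ) (hapos : ∀ i, 0 < a i) (hbpos : ∀ i, 0 < b i)
    (hasum : ∑ i, a i = 1) (hbsum : ∑ i, b i = 1)
    (hcond : (k : ℝ) > (∑ i, (a i) ^ 2) / (∑ i, (b i) ^ 2)) :
    (μ {ω | |(∑ i, a i * X i ω) - θ| < |(∑ i, b i * Y i ω) - θ|}).toReal ≥ 1 / 2 := by
  classical
  haveI : Nonempty (Fin n) := Fin.pos_iff_nonempty.mp hn
  set Z : Fin n ⊕ Fin n → Ω → ℝ :=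
    Sum.elim (fun i ω => a i * (X i ω - θ)) (fun i ω => b i * (Y i ω - θ)) with hZdef
  have hZmeas : ∀ s, Measurable (Z s) := by
    rintro (i | i)
    · exact ((hXmeas i).sub_const θ).const_mul _
    · exact ((hYmeas i).sub_const θ).const_mul _
  have hZindep : iIndepFun Z μ := by
    have := hindep.comp
      (Sum.elim (fun (i : Fin n) (x : ℝ) => a i * (x - θ)) (fun (i : Fin n) (x : ℝ) => b i * (x - θ)))
      (by rintro (i | i)
          · exact (measurable_id.sub_const θ).const_mul _
          · exact (measurable_id.sub_const θ).const_mul _)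
    convert this using 1
    funext s
    cases s <;> rfl
  set w : Fin n ⊕ Fin n → ℝ≥0 :=
    Sum.elim (fun i => (show ℝ≥0 from NNReal.mk ((a i)^2) (sq_nonneg _)) * v)
      (fun i => (show ℝ≥0 from NNReal.mk ((b i)^2) (sq_nonneg _)) * (k * v)) with hwdef
  have hZdist : ∀ s, μ.map (Z s) = gaussianReal 0 (w s) := by
    rintro (i | i)
    · simp only [hZdef, hwdef, Sum.elim_inl]
      exact map_affine (hXmeas i) (hXdist i) (a i)
    · simp only [hZdef, hwdef, Sum.elim_inr]
      exact map_affine (hYmeas i) (hYdist i) (b i)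
  have hma : ∀ i, (0:ℝ≥0) < (show ℝ≥0 from NNReal.mk ((a i)^2) (sq_nonneg _)) := fun i =>
    NNReal.coe_pos.mp (by rw [NNReal.coe_mk]; exact pow_pos (hapos i) 2)
  have hmb : ∀ i, (0:ℝ≥0) < (show ℝ≥0 from NNReal.mk ((b i)^2) (sq_nonneg _)) := fun i =>
    NNReal.coe_pos.mp (by rw [NNReal.coe_mk]; exact pow_pos (hbpos i) 2)
  have hw : ∀ s, w s ≠ 0 := by
    rintro (i | i)
    · exact (mul_pos (hma i) hv).ne'
    · exact (mul_pos (hmb i) (mul_pos hk hv)).ne'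
  set SL : Finset (Fin n ⊕ Fin n) := Finset.univ.map ⟨Sum.inl, Sum.inl_injective⟩ with hSL
  set SR : Finset (Fin n ⊕ Fin n) := Finset.univ.map ⟨Sum.inr, Sum.inr_injective⟩ with hSR
  have hSLne : SL.Nonempty := Finset.univ_nonempty.map
  have hSRne : SR.Nonempty := Finset.univ_nonempty.map
  have hU : μ.map (fun ω => ∑ i, a i * (X i ω - θ))
      = gaussianReal 0 (∑ i, (show ℝ≥0 from NNReal.mk ((a i)^2) (sq_nonneg _)) * v) := by
    have := indep_gauss_sum Z hZmeas hZindep w SL hSLne (fun i _ => hw i) (fun i _ => hZdist i)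
    simpa [hSL, Finset.sum_map, hZdef, hwdef] using this
  have hV : μ.map (fun ω => ∑ i, b i * (Y i ω - θ))
      = gaussianReal 0 (∑ i, (show ℝ≥0 from NNReal.mk ((b i)^2) (sq_nonneg _)) * (k * v)) := by
    have := indep_gauss_sum Z hZmeas hZindep w SR hSRne (fun i _ => hw i) (fun i _ => hZdist i)
    simpa [hSR, Finset.sum_map, hZdef, hwdef] using this
  have hdisj : Disjoint SL SR := by
    simp [hSL, hSR, Finset.disjoint_left]
  have hUmeas : Measurable (fun ω => ∑ i, a i * (X i ω - θ)) :=
    Finset.measurable_sum _ fun i _ => ((hXmeas i).sub_const θ).const_mul _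
  have hVmeas : Measurable (fun ω => ∑ i, b i * (Y i ω - θ)) :=
    Finset.measurable_sum _ fun i _ => ((hYmeas i).sub_const θ).const_mul _
  have hUV : IndepFun (fun ω => ∑ i, a i * (X i ω - θ)) (fun ω => ∑ i, b i * (Y i ω - θ)) μ := by
    have h0 := hZindep.indepFun_finset SL SR hdisj hZmeas
    have h1 := h0.comp (φ := fun p : ((SL : Finset (Fin n ⊕ Fin n)) : Type) → ℝ => ∑ i, p i)
      (ψ := fun p : ((SR : Finset (Fin n ⊕ Fin n)) : Type) → ℝ => ∑ i, p i)
      (Finset.measurable_sum _ fun i _ => measurable_pi_apply i)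
      (Finset.measurable_sum _ fun i _ => measurable_pi_apply i)
    have e1 : ((fun p : ((SL : Finset (Fin n ⊕ Fin n)) : Type) → ℝ => ∑ i, p i)
        ∘ (fun ω (i : SL) => Z i ω)) = fun ω => ∑ i, a i * (X i ω - θ) := by
      funext ω
      simp only [Function.comp_apply]
      rw [show (∑ i : SL, Z i ω) = ∑ s ∈ SL, Z s ω from Finset.sum_coe_sort SL (fun s => Z s ω)]
      simp [hSL, Finset.sum_map, hZdef]
    have e2 : ((fun p : ((SR : Finset (Fin n ⊕ Fin n)) : Type) → ℝ => ∑ i, p i)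
        ∘ (fun ω (i : SR) => Z i ω)) = fun ω => ∑ i, b i * (Y i ω - θ) := by
      funext ω
      simp only [Function.comp_apply]
      rw [show (∑ i : SR, Z i ω) = ∑ s ∈ SR, Z s ω from Finset.sum_coe_sort SR (fun s => Z s ω)]
      simp [hSR, Finset.sum_map, hZdef]
    rwa [e1, e2] at h1
  -- variance comparison
  have hSb : (0:ℝ) < ∑ i, (b i)^2 := by
    apply Finset.sum_pos (fun i _ => pow_pos (hbpos i) 2) Finset.univ_nonempty
  have hvR : (0:ℝ) < v := hv
  have hst : (∑ i, (show ℝ≥0 from NNReal.mk ((a i)^2) (sq_nonneg _)) * v)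
      ≤ ∑ i, (show ℝ≥0 from NNReal.mk ((b i)^2) (sq_nonneg _)) * (k * v) := by
    rw [← NNReal.coe_le_coe]
    push_cast [NNReal.coe_mk]
    rw [← Finset.sum_mul, ← Finset.sum_mul]
    have h1 : (∑ i, (a i)^2) < (∑ i, (b i)^2) * k := by
      have := (div_lt_iff₀ hSb).mp hcond
      linarith
    nlinarith [mul_pos (mul_pos hSb (NNReal.coe_pos.mpr hk)) hvR]
  have hsne : (∑ i, (show ℝ≥0 from NNReal.mk ((a i)^2) (sq_nonneg _)) * v) ≠ 0 :=
    (Finset.sum_pos (fun i _ => mul_pos (hma i) hv) Finset.univ_nonempty).ne'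
  have hfinal := half_le_prob hUmeas hVmeas hUV hsne hst hU hV
  -- rewrite the event set
  have hseteq : {ω | |(∑ i, a i * X i ω) - θ| < |(∑ i, b i * Y i ω) - θ|}
      = {ω | |(fun ω => ∑ i, a i * (X i ω - θ)) ω| < |(fun ω => ∑ i, b i * (Y i ω - θ)) ω|} := by
    ext ω
    have e1 : ∑ i, a i * (X i ω - θ) = (∑ i, a i * X i ω) - θ := by
      simp [mul_sub, Finset.sum_sub_distrib, ← Finset.sum_mul, hasum]
    have e2 : ∑ i, b i * (Y i ω - θ) = (∑ i, b i * Y i ω) - θ := by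
      simp [mul_sub, Finset.sum_sub_distrib, ← Finset.sum_mul, hbsum]
    simp [e1, e2]
  rw [hseteq]
  exact hfinal

/-- Example 6, normal samples. -/
theorem pitman_closer_gaussian_linear_combinations
    {Ω : Type*} [MeasurableSpace Ω] (μ : Measure Ω) [IsProbabilityMeasure μ]
    (n : ℕ) (hn : 0 < n)
    (X Y : Fin n → Ω → ℝ)
    (hXmeas : ∀ i, Measurable (X i)) (hYmeas : ∀ i, Measurable (Y i))
    -- the two samples together form an independent family
    (hindep : iIndepFun (Sum.elim X Y) μ)
    (θ : ℝ) (v k : ℝ≥0) (hv : 0 < v) (hk : 0 < k)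
    -- `Xᵢ ~ N(θ, v)` and `Yᵢ ~ N(θ, k v)`
    (hXdist : ∀ i, Measure.map (X i) μ = gaussianReal θ v)
    (hYdist : ∀ i, Measure.map (Y i) μ = gaussianReal θ (k * v))
    (a b : Fin n → ℝ) (hapos : ∀ i, 0 < a i) (hbpos : ∀ i, 0 < b i)
    (hasum : ∑ i, a i = 1) (hbsum : ∑ i, b i = 1) :
    ((k : ℝ) > (∑ i, (a i) ^ 2) / (∑ i, (b i) ^ 2) →
        (μ {ω | |(∑ i, a i * X i ω) - θ| < |(∑ i, b i * Y i ω) - θ|}).toReal ≥ 1 / 2)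
      ∧ ((1 : ℝ≥0) < k →
        (μ {ω | |(∑ i, X i ω) / n - θ| < |(∑ i, Y i ω) / n - θ|}).toReal ≥ 1 / 2) := by
  constructor
  · intro hcond
    exact pitman_main μ n hn X Y hXmeas hYmeas hindep θ v k hv hk hXdist hYdist
      a b hapos hbpos hasum hbsum hcond
  · intro h1k
    have hnR : (0:ℝ) < n := Nat.cast_pos.mpr hn
    have hsetXY : ∀ (W : Fin n → Ω → ℝ) (ω : Ω),
        ∑ i, (1/(n:ℝ)) * W i ω = (∑ i, W i ω) / n := by
      intro W ω
      rw [Finset.sum_div]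
      exact Finset.sum_congr rfl fun i _ => by rw [one_div, inv_mul_eq_div]
    have hsum1 : ∑ _i : Fin n, (1/(n:ℝ)) = 1 := by
      simp [Finset.sum_const, Finset.card_univ]
      field_simp
    have hratio : (k : ℝ) > (∑ _i : Fin n, (1/(n:ℝ))^2) / (∑ _i : Fin n, (1/(n:ℝ))^2) := by
      have hpos : (0:ℝ) < ∑ _i : Fin n, (1/(n:ℝ))^2 := by
        haveI : Nonempty (Fin n) := Fin.pos_iff_nonempty.mp hn
        exact Finset.sum_pos (fun i _ => by positivity) Finset.univ_nonempty
      rw [div_self hpos.ne']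
      exact_mod_cast h1k
    have := pitman_main μ n hn X Y hXmeas hYmeas hindep θ v k hv hk hXdist hYdist
      (fun _ => 1/(n:ℝ)) (fun _ => 1/(n:ℝ)) (fun _ => by positivity) (fun _ => by positivity)
      hsum1 hsum1 hratio
    have hset : {ω | |(∑ i, (1/(n:ℝ)) * X i ω) - θ| < |(∑ i, (1/(n:ℝ)) * Y i ω) - θ|}
        = {ω | |(∑ i, X i ω) / n - θ| < |(∑ i, Y i ω) / n - θ|} := by
      ext ω
      rw [Set.mem_setOf_eq, Set.mem_setOf_eq, hsetXY X ω, hsetXY Y ω]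
    rwa [hset] at this
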